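/- Let P be a perfect poset, let T, S ∈ P, and let s be a string with s ∈ T and s ∈ S. Then there exist U, U' ∈ P with U ⊆ T_s, U' ⊆ S_s, and U ∧ U' = ∅ (i.e., no perfect tree is contained in U ∩ U'). -/
import Mathlib


/-- A tree: a set of finite binary strings closed under initial segments (prefixes). -/
def IsTree (T : Set (List Bool)) : Prop :=
  ∀ ⦃s t : List Bool⦄, s <+: t → t ∈ T → s ∈ T

/-- A node `t` splits in a set `A` of strings if both one-step extensions belong to `A`. -/
def Splits (A : Set (List Bool)) (t : List Bool) : Prop :=
  t ++ [false] ∈ A ∧ t ++ [true] ∈ A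

/-- A perfect tree: a nonempty tree each of whose elements has a splitting extension in it. -/
def IsPerfect (T : Set (List Bool)) : Prop :=
  T.Nonempty ∧ IsTree T ∧ ∀ s ∈ T, ∃ t ∈ T, s <+: t ∧ Splits T t

/-- The cone `C_s`: all strings comparable with `s`. -/
def Cone (s : List Bool) : Set (List Bool) :=
  {t | s <+: t ∨ t <+: s}

/-- `T_s`: the elements of `T` comparable with `s`. -/
def restrictTo (T : Set (List Bool)) (s : List Bool) : Set (List Bool) :=
  {t ∈ T | s <+: t ∨ t <+: s}

/-- The meet `A ∧ B`: the union of all perfect trees contained in `A ∩ B`. -/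
def meet (A B : Set (List Bool)) : Set (List Bool) :=
  ⋃₀ {U | IsPerfect U ∧ U ⊆ A ∩ B}

/-- A perfect poset: a collection of perfect trees containing all cones and
closed under unions and (nonempty) meets. -/
def PerfectPoset (P : Set (Set (List Bool))) : Prop :=
  (∀ T ∈ P, IsPerfect T) ∧
  (∀ s : List Bool, Cone s ∈ P) ∧
  (∀ T ∈ P, ∀ S ∈ P, T ∪ S ∈ P) ∧
  (∀ T ∈ P, ∀ S ∈ P, meet T S ≠ ∅ → meet T S ∈ P)

/-- `T` and `S` are compatible in `P` if some `U ∈ P` is contained in both. -/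
def CompatIn (P : Set (Set (List Bool))) (T S : Set (List Bool)) : Prop :=
  ∃ U ∈ P, U ⊆ T ∧ U ⊆ S

section Aux

lemma restrictTo_perfect {T : Set (List Bool)} (hT : IsPerfect T) {s : List Bool}
    (hs : s ∈ T) : IsPerfect (restrictTo T s) := by
  obtain ⟨-, htree, hsplit⟩ := hT
  refine ⟨⟨s, hs, Or.inl List.prefix_rfl⟩, ?_, ?_⟩
  · rintro u t hut ⟨htT, hts⟩
    refine ⟨htree hut htT, ?_⟩
    rcases hts with h | h
    · rcases List.prefix_or_prefix_of_prefix hut h with h' | h'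
      · exact Or.inr h'
      · exact Or.inl h'
    · exact Or.inr (hut.trans h)
  · rintro u ⟨huT, hus⟩
    rcases hus with h | h
    · obtain ⟨t, htT, hut, h0, h1⟩ := hsplit u huT
      exact ⟨t, ⟨htT, Or.inl (h.trans hut)⟩, hut,
        ⟨h0, Or.inl ((h.trans hut).trans (List.prefix_append t [false]))⟩,
        ⟨h1, Or.inl ((h.trans hut).trans (List.prefix_append t [true]))⟩⟩
    · obtain ⟨t, htT, hst, h0, h1⟩ := hsplit s hs
      exact ⟨t, ⟨htT, Or.inl hst⟩, h.trans hst,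
        ⟨h0, Or.inl (hst.trans (List.prefix_append t [false]))⟩,
        ⟨h1, Or.inl (hst.trans (List.prefix_append t [true]))⟩⟩

lemma restrictTo_subset (T : Set (List Bool)) (s : List Bool) :
    restrictTo T s ⊆ T ∩ Cone s := fun t ht => ⟨ht.1, ht.2⟩

lemma meet_subset (A B : Set (List Bool)) : meet A B ⊆ A ∩ B := by
  rintro x ⟨W, ⟨-, hW⟩, hx⟩
  exact hW hx

lemma subset_meet {A B W : Set (List Bool)} (hW : IsPerfect W) (h : W ⊆ A ∩ B) :
    W ⊆ meet A B := fun x hx => ⟨W, ⟨hW, h⟩, hx⟩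

lemma meet_mem {P : Set (Set (List Bool))} (hP : PerfectPoset P)
    {A B W : Set (List Bool)} (hA : A ∈ P) (hB : B ∈ P)
    (hW : IsPerfect W) (h : W ⊆ A ∩ B) : meet A B ∈ P := by
  refine hP.2.2.2 A hA B hB ?_
  obtain ⟨x, hx⟩ := hW.1
  intro hem
  exact absurd (subset_meet hW h hx) (by simp [hem])

lemma perfect_unbounded {W : Set (List Bool)} (hW : IsPerfect W) :
    ∀ n : ℕ, ∃ x ∈ W, n ≤ x.length := by
  intro n
  induction n with
  | zero => obtain ⟨x, hx⟩ := hW.1; exact ⟨x, hx, Nat.zero_le _⟩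
  | succ n ih =>
    obtain ⟨x, hxW, hn⟩ := ih
    obtain ⟨t, htW, hxt, h0, h1⟩ := hW.2.2 x hxW
    refine ⟨t ++ [true], h1, ?_⟩
    have := hxt.length_le
    simp only [List.length_append, List.length_cons]
    omega

lemma cone_cone_length {t x : List Bool}
    (h0 : x ∈ Cone (t ++ [false])) (h1 : x ∈ Cone (t ++ [true])) :
    x.length ≤ t.length := by
  have hne : t ++ [false] ≠ t ++ [true] := by simp
  have hlen : (t ++ [false]).length = (t ++ [true]).length := by simp
  rcases h0 with h0 | h0 <;> rcases h1 with h1 | h1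
  · rcases List.prefix_or_prefix_of_prefix h0 h1 with h | h
    · exact absurd (h.eq_of_length hlen) hne
    · exact absurd ((h.eq_of_length hlen.symm)).symm hne
  · exact absurd ((h0.trans h1).eq_of_length hlen) hne
  · exact absurd (((h1.trans h0).eq_of_length hlen.symm)).symm hne
  · by_contra hc
    push_neg at hc
    have l0 := h0.length_le
    simp only [List.length_append, List.length_cons, List.length_nil] at l0
    have hx0 : x = t ++ [false] := h0.eq_of_length
      (by simp only [List.length_append, List.length_cons, List.length_nil]; omega)
    have hx1 : x = t ++ [true] := h1.eq_of_length
      (by simp only [List.length_append, List.length_cons, List.length_nil]; omega)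
    exact hne (hx0.symm.trans hx1)

end Aux

/-- below a common node one can find incompatible refinements in `P`. -/
theorem exists_incompatible_below_node (P : Set (Set (List Bool)))
    (hP : PerfectPoset P) (T S : Set (List Bool)) (hT : T ∈ P) (hS : S ∈ P)
    (s : List Bool) (hsT : s ∈ T) (hsS : s ∈ S) :
    ∃ U ∈ P, ∃ U' ∈ P, U ⊆ restrictTo T s ∧ U' ⊆ restrictTo S s ∧
      meet U U' = ∅ := by
  have hTp := hP.1 T hT
  have hSp := hP.1 S hS
  have hCone := hP.2.1
  -- A = meet T (Cone s) ∈ P, A ⊆ restrictTo T s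
  have hTs := restrictTo_perfect hTp hsT
  have hSs := restrictTo_perfect hSp hsS
  set A := meet T (Cone s) with hAdef
  set B := meet S (Cone s) with hBdef
  have hA : A ∈ P := meet_mem hP hT (hCone s) hTs (restrictTo_subset T s)
  have hB : B ∈ P := meet_mem hP hS (hCone s) hSs (restrictTo_subset S s)
  have hAsub : A ⊆ restrictTo T s := fun x hx => by
    have := meet_subset T (Cone s) hx; exact ⟨this.1, this.2⟩
  have hBsub : B ⊆ restrictTo S s := fun x hx => by
    have := meet_subset S (Cone s) hx; exact ⟨this.1, this.2⟩
  by_cases hMB : meet A B = ∅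
  · exact ⟨A, hA, B, hB, hAsub, hBsub, hMB⟩
  · set M := meet A B with hMdef
    have hM : M ∈ P := hP.2.2.2 A hA B hB hMB
    have hMp : IsPerfect M := hP.1 M hM
    obtain ⟨m, hm⟩ := hMp.1
    obtain ⟨t, htM, -, h0, h1⟩ := hMp.2.2 m hm
    -- U, U'
    set U := meet M (Cone (t ++ [false])) with hUdef
    set U' := meet M (Cone (t ++ [true])) with hU'def
    have hU : U ∈ P :=
      meet_mem hP hM (hCone _) (restrictTo_perfect hMp h0) (restrictTo_subset M _)
    have hU' : U' ∈ P :=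
      meet_mem hP hM (hCone _) (restrictTo_perfect hMp h1) (restrictTo_subset M _)
    refine ⟨U, hU, U', hU', ?_, ?_, ?_⟩
    · exact fun x hx => hAsub ((meet_subset A B) ((meet_subset M _) hx).1).1
    · exact fun x hx => hBsub ((meet_subset A B) ((meet_subset M _) hx).1).2
    · by_contra hne
      obtain ⟨x, W, ⟨hWp, hWsub⟩, hxW⟩ := Set.nonempty_iff_ne_empty.2 hne
      obtain ⟨y, hyW, hy⟩ := perfect_unbounded hWp (t.length + 1)
      have hy0 : y ∈ Cone (t ++ [false]) := ((meet_subset M _) (hWsub hyW).1).2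
      have hy1 : y ∈ Cone (t ++ [true]) := ((meet_subset M _) (hWsub hyW).2).2
      have := cone_cone_length hy0 hy1
      omega
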